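/- Let $f : A \subseteq X \times Y \to V$ be $C^1$ with $0$ a regular value, where at each zero the partial derivative $\partial f / \partial y$ is Fredholm of index zero and the T condition holds. Then the restriction to $M = f^{-1}(0)$ of the projection $\Pi : X \times Y \to X$ is a Fredholm map of index zero, i.e., for each $(x_0,y_0) \in M$ the kernel of $d\Pi|_{T_{(x_0,y_0)}M}$ is isomorphic to $\ker(\partial f/\partial y(x_0,y_0))$ and the image $d\Pi(T_{(x_0,y_0)}M) = (\partial f/\partial x(x_0,y_0))^{-1}(\operatorname{Im} \partial f/\partial y(x_0,y_0))$ has codimension in $T_{x_0}X$ equal to the codimension of $\operatorname{Im}(\partial f/\partial y(x_0,y_0))$ in $V$. -/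

import Mathlib

set_option synthInstance.maxHeartbeats 400000

/-- The projection `Π|_M : M → X` on the zero set `M = f⁻¹(0)` is Fredholm of
index zero, stated at a single zero in the linear charts: with `Tx`, `Ty` the
partial derivatives at the zero (so that the total derivative `Tx ⊕ Ty` is
surjective, `Ty` is Fredholm of index zero, and the T condition holds), and
`TM = ker (Tx ⊕ Ty)` the tangent space of `M`, the kernel of
`dΠ|_{TM}` is isomorphic to `ker Ty`, its image equals `Tx⁻¹(Im Ty)`, and the
codimension of this image in `X` equals the codimension of `Im Ty` in `V`. -/
theorem stmt_16 {X Y V : Type*}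
    [NormedAddCommGroup X] [NormedSpace ℝ X] [CompleteSpace X]
    [NormedAddCommGroup Y] [InnerProductSpace ℝ Y] [CompleteSpace Y]
    [NormedAddCommGroup V] [InnerProductSpace ℝ V] [CompleteSpace V]
    (Tx : X →L[ℝ] V) (Ty : Y →L[ℝ] V)
    (hsurj : Function.Surjective (Tx.coprod Ty))
    (hT : (LinearMap.range (Tx : X →ₗ[ℝ] V))ᗮ ⊓ (LinearMap.range (Ty : Y →ₗ[ℝ] V))ᗮ = ⊥)
    (hker : FiniteDimensional ℝ (LinearMap.ker (Ty : Y →ₗ[ℝ] V)))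
    (hcoker : FiniteDimensional ℝ (V ⧸ LinearMap.range (Ty : Y →ₗ[ℝ] V)))
    (hind : Module.finrank ℝ (LinearMap.ker (Ty : Y →ₗ[ℝ] V)) =
      Module.finrank ℝ (V ⧸ LinearMap.range (Ty : Y →ₗ[ℝ] V))) :
    Nonempty
        ((LinearMap.ker
            ((ContinuousLinearMap.fst ℝ X Y).comp
              (LinearMap.ker (Tx.coprod Ty : X × Y →ₗ[ℝ] V)).subtypeL).toLinearMap) ≃ₗ[ℝ]
          LinearMap.ker (Ty : Y →ₗ[ℝ] V)) ∧
      LinearMap.range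
          ((ContinuousLinearMap.fst ℝ X Y).comp
            (LinearMap.ker (Tx.coprod Ty : X × Y →ₗ[ℝ] V)).subtypeL).toLinearMap =
        Submodule.comap (Tx : X →ₗ[ℝ] V) (LinearMap.range (Ty : Y →ₗ[ℝ] V)) ∧
      Module.finrank ℝ
          (X ⧸ LinearMap.range
            ((ContinuousLinearMap.fst ℝ X Y).comp
              (LinearMap.ker (Tx.coprod Ty : X × Y →ₗ[ℝ] V)).subtypeL).toLinearMap) =
        Module.finrank ℝ (V ⧸ LinearMap.range (Ty : Y →ₗ[ℝ] V)) := by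
  set L := ((ContinuousLinearMap.fst ℝ X Y).comp
      (LinearMap.ker (Tx.coprod Ty : X × Y →ₗ[ℝ] V)).subtypeL).toLinearMap with hL
  -- the range identification
  have hrange : LinearMap.range L
      = Submodule.comap (Tx : X →ₗ[ℝ] V) (LinearMap.range (Ty : Y →ₗ[ℝ] V)) := by
    ext x
    simp only [LinearMap.mem_range, Submodule.mem_comap, LinearMap.mem_range]
    constructor
    · rintro ⟨⟨⟨a, b⟩, hab⟩, rfl⟩
      have h : Tx a + Ty b = 0 := hab
      refine ⟨-b, ?_⟩
      show Ty (-b) = Tx a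
      rw [map_neg]
      exact (eq_neg_of_add_eq_zero_left h).symm
    · rintro ⟨y, hy⟩
      refine ⟨⟨⟨x, -y⟩, ?_⟩, rfl⟩
      simp [LinearMap.mem_ker, show Ty y = Tx x from hy]
  -- kernel equivalence
  let e : LinearMap.ker (Ty : Y →ₗ[ℝ] V) →ₗ[ℝ] LinearMap.ker L :=
    { toFun := fun y => ⟨⟨⟨0, y.1⟩, by
        simp [LinearMap.mem_ker, y.2]⟩, rfl⟩
      map_add' := fun a b => by ext <;> simp
      map_smul' := fun c a => by ext <;> simp }
  have hbij : Function.Bijective e := by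
    constructor
    · intro a b hab
      have h1 := congrArg
        (fun z : LinearMap.ker L => ((z : LinearMap.ker (Tx.coprod Ty : X × Y →ₗ[ℝ] V)) : X × Y)) hab
      exact Subtype.ext (congrArg Prod.snd h1)
    · rintro ⟨⟨⟨a, b⟩, hab⟩, ha⟩
      have ha' : a = 0 := ha
      subst ha'
      have hb : Ty b = 0 := by
        have h : Tx 0 + Ty b = 0 := hab
        simpa using h
      exact ⟨⟨b, hb⟩, by ext <;> rfl⟩
  refine ⟨⟨(LinearEquiv.ofBijective e hbij).symm⟩, hrange, ?_⟩
  -- codimension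
  let g : X →ₗ[ℝ] V ⧸ LinearMap.range (Ty : Y →ₗ[ℝ] V) :=
    (LinearMap.range (Ty : Y →ₗ[ℝ] V)).mkQ.comp (Tx : X →ₗ[ℝ] V)
  have hgker : LinearMap.ker g = LinearMap.range L := by
    rw [hrange]
    show LinearMap.ker ((LinearMap.range (Ty : Y →ₗ[ℝ] V)).mkQ.comp (Tx : X →ₗ[ℝ] V)) = _
    rw [LinearMap.ker_comp, Submodule.ker_mkQ]
  have hgsurj : Function.Surjective g := by
    intro q
    obtain ⟨v, rfl⟩ := (LinearMap.range (Ty : Y →ₗ[ℝ] V)).mkQ_surjective q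
    obtain ⟨⟨x, y⟩, hxy⟩ := hsurj v
    refine ⟨x, ?_⟩
    have h : Tx x + Ty y = v := hxy
    show (LinearMap.range (Ty : Y →ₗ[ℝ] V)).mkQ (Tx x) = (LinearMap.range (Ty : Y →ₗ[ℝ] V)).mkQ v
    rw [← h]
    simp [Submodule.Quotient.eq]
  have equiv := g.quotKerEquivOfSurjective hgsurj
  rw [hgker] at equiv
  exact equiv.finrank_eq
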